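/- Let W : ℝ² → ℝ be a polynomial function with W(x,y) > 0 for all (x, y) ∈ ℝ². Then the Jacobian matrix of the R4-class vector field (P_W, Q_W) at the point A = (1/2, √35/2) has trace τ = 144 + √35·W(1/2, √35/2) and determinant Δ = 144·√35·W(1/2, √35/2), so that τ > 0 and τ² − 4Δ = (144 − √35·W(1/2, √35/2))² ≥ 0; hence A is an unstable node. -/

import Mathlib

lemma diff_eval_fst (W : MvPolynomial (Fin 2) ℝ) (c : ℝ) :
    Differentiable ℝ fun x : ℝ => MvPolynomial.eval ![x, c] W := by
  induction W using MvPolynomial.induction_on with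
  | C a => simpa using differentiable_const a
  | add p q hp hq => simp only [map_add]; exact hp.add hq
  | mul_X p n hp =>
      simp only [MvPolynomial.eval_mul, MvPolynomial.eval_X]
      refine hp.mul ?_
      fin_cases n
      · simpa using differentiable_id
      · simpa using differentiable_const c

lemma diff_eval_snd (W : MvPolynomial (Fin 2) ℝ) (c : ℝ) :
    Differentiable ℝ fun y : ℝ => MvPolynomial.eval ![c, y] W := by
  induction W using MvPolynomial.induction_on with
  | C a => simpa using differentiable_const a
  | add p q hp hq => simp only [map_add]; exact hp.add hq
  | mul_X p n hp =>
      simp only [MvPolynomial.eval_mul, MvPolynomial.eval_X]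
      refine hp.mul ?_
      fin_cases n
      · simpa using differentiable_const c
      · simpa using differentiable_id

/-- For any everywhere-positive polynomial `W`, the Jacobian of the R4-class vector field at
`A = (1/2, √35/2)` has trace `τ = 144 + √35·W(A)` and determinant `Δ = 144·√35·W(A)`, with
`τ > 0` and `τ² − 4Δ = (144 − √35·W(A))² ≥ 0`: `A` is an unstable node. -/
theorem stmt10 (W : MvPolynomial (Fin 2) ℝ)
    (hW : ∀ x y : ℝ, 0 < MvPolynomial.eval ![x, y] W)
    (P Q : ℝ → ℝ → ℝ)
    (hP : ∀ x y : ℝ, P x y = x * (x^2 + y^2 - 1) * (x^2 + y^2 - 9)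
      - y * (x^2 + y^2 - 2*x - 8) * MvPolynomial.eval ![x, y] W)
    (hQ : ∀ x y : ℝ, Q x y = y * (x^2 + y^2 - 1) * (x^2 + y^2 - 9)
      + x * (x^2 + y^2 - 2*x - 8) * MvPolynomial.eval ![x, y] W)
    (a₁ a₂ : ℝ) (ha₁ : a₁ = 1/2) (ha₂ : a₂ = Real.sqrt 35 / 2)
    (τ Δ : ℝ)
    (hτ : τ = deriv (fun x : ℝ => P x a₂) a₁ + deriv (fun y : ℝ => Q a₁ y) a₂)
    (hΔ : Δ = deriv (fun x : ℝ => P x a₂) a₁ * deriv (fun y : ℝ => Q a₁ y) a₂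
      - deriv (fun y : ℝ => P a₁ y) a₂ * deriv (fun x : ℝ => Q x a₂) a₁) :
    τ = 144 + Real.sqrt 35 * MvPolynomial.eval ![a₁, a₂] W ∧
    Δ = 144 * Real.sqrt 35 * MvPolynomial.eval ![a₁, a₂] W ∧
    0 < τ ∧
    τ^2 - 4*Δ = (144 - Real.sqrt 35 * MvPolynomial.eval ![a₁, a₂] W)^2 ∧
    0 ≤ τ^2 - 4*Δ := by
  subst ha₁ ha₂ hτ hΔ
  set s := Real.sqrt 35 with hsdef
  have hs : s ^ 2 = 35 := Real.sq_sqrt (by norm_num)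
  have hs0 : 0 < s := Real.sqrt_pos.mpr (by norm_num)
  set WA := MvPolynomial.eval ![(1/2 : ℝ), s/2] W with hWAdef
  have hWApos : 0 < WA := hW (1/2) (s/2)
  -- derivatives of W along the two axes
  set d1 := deriv (fun x : ℝ => MvPolynomial.eval ![x, s/2] W) (1/2) with hd1
  set d2 := deriv (fun y : ℝ => MvPolynomial.eval ![(1/2 : ℝ), y] W) (s/2) with hd2
  have hg1 : HasDerivAt (fun x : ℝ => MvPolynomial.eval ![x, s/2] W) d1 (1/2) :=
    ((diff_eval_fst W (s/2)) (1/2)).hasDerivAt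
  have hg2 : HasDerivAt (fun y : ℝ => MvPolynomial.eval ![(1/2 : ℝ), y] W) d2 (s/2) :=
    ((diff_eval_snd W (1/2)) (s/2)).hasDerivAt
  -- component derivatives (x-direction, at x = 1/2)
  have hA : HasDerivAt (fun x : ℝ => x^2 + (s/2)^2 - 1) 1 (1/2) := by
    have := ((hasDerivAt_pow 2 ((1:ℝ)/2)).add_const ((s/2)^2)).sub_const 1
    exact this.congr_deriv (by norm_num)
  have hB : HasDerivAt (fun x : ℝ => x^2 + (s/2)^2 - 9) 1 (1/2) := by
    have := ((hasDerivAt_pow 2 ((1:ℝ)/2)).add_const ((s/2)^2)).sub_const 9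
    exact this.congr_deriv (by norm_num)
  have hC : HasDerivAt (fun x : ℝ => x^2 + (s/2)^2 - 2*x - 8) (-1) (1/2) := by
    have := ((((hasDerivAt_pow 2 ((1:ℝ)/2)).add_const ((s/2)^2)).sub
      ((hasDerivAt_id ((1:ℝ)/2)).const_mul 2)).sub_const 8)
    exact this.congr_deriv (by norm_num)
  -- component derivatives (y-direction, at y = s/2)
  have hA' : HasDerivAt (fun y : ℝ => (1/2:ℝ)^2 + y^2 - 1) s (s/2) := by
    have := ((hasDerivAt_pow 2 (s/2)).const_add ((1/2:ℝ)^2)).sub_const 1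
    exact this.congr_deriv (by norm_num <;> ring)
  have hB' : HasDerivAt (fun y : ℝ => (1/2:ℝ)^2 + y^2 - 9) s (s/2) := by
    have := ((hasDerivAt_pow 2 (s/2)).const_add ((1/2:ℝ)^2)).sub_const 9
    exact this.congr_deriv (by norm_num <;> ring)
  have hC' : HasDerivAt (fun y : ℝ => (1/2:ℝ)^2 + y^2 - 2*(1/2:ℝ) - 8) s (s/2) := by
    have := (((hasDerivAt_pow 2 (s/2)).const_add ((1/2:ℝ)^2)).sub_const (2*(1/2:ℝ))).sub_const 8
    exact this.congr_deriv (by norm_num <;> ring)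
  -- the four Jacobian entries
  have hPx : HasDerivAt (fun x : ℝ => P x (s/2)) (4 + s/2 * WA) (1/2) := by
    have heq : (fun x : ℝ => P x (s/2)) = fun x : ℝ =>
        x * (x^2 + (s/2)^2 - 1) * (x^2 + (s/2)^2 - 9)
          - s/2 * (x^2 + (s/2)^2 - 2*x - 8) * MvPolynomial.eval ![x, s/2] W :=
      funext fun x => hP x (s/2)
    rw [heq]
    have h := (((hasDerivAt_id ((1:ℝ)/2)).mul hA).mul hB).sub ((hC.const_mul (s/2)).mul hg1)
    refine h.congr_deriv ?_
    symm
    simp only [Pi.mul_apply, id_eq]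
    linear_combination (-s^2/16 - 1/16 + s*d1/8) * hs
  have hQx : HasDerivAt (fun x : ℝ => Q x (s/2)) (4*s - 1/2 * WA) (1/2) := by
    have heq : (fun x : ℝ => Q x (s/2)) = fun x : ℝ =>
        s/2 * (x^2 + (s/2)^2 - 1) * (x^2 + (s/2)^2 - 9)
          + x * (x^2 + (s/2)^2 - 2*x - 8) * MvPolynomial.eval ![x, s/2] W :=
      funext fun x => hQ x (s/2)
    rw [heq]
    have h := ((hA.const_mul (s/2)).mul hB).add (((hasDerivAt_id ((1:ℝ)/2)).mul hC).mul hg1)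
    refine h.congr_deriv ?_
    symm
    simp only [Pi.mul_apply, id_eq]
    linear_combination (-s/4 - WA/4 - d1/8) * hs
  have hPy : HasDerivAt (fun y : ℝ => P (1/2) y) (4*s - 35/2 * WA) (s/2) := by
    have heq : (fun y : ℝ => P (1/2) y) = fun y : ℝ =>
        1/2 * ((1/2:ℝ)^2 + y^2 - 1) * ((1/2:ℝ)^2 + y^2 - 9)
          - y * ((1/2:ℝ)^2 + y^2 - 2*(1/2:ℝ) - 8) * MvPolynomial.eval ![(1/2:ℝ), y] W :=
      funext fun y => hP (1/2) y
    rw [heq]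
    have h := ((hA'.const_mul (1/2)).mul hB').sub (((hasDerivAt_id (s/2)).mul hC').mul hg2)
    refine h.congr_deriv ?_
    symm
    simp only [Pi.mul_apply, id_eq]
    linear_combination (-s/4 + s*d2/8 + 3*WA/4) * hs
  have hQy : HasDerivAt (fun y : ℝ => Q (1/2) y) (140 + s/2 * WA) (s/2) := by
    have heq : (fun y : ℝ => Q (1/2) y) = fun y : ℝ =>
        y * ((1/2:ℝ)^2 + y^2 - 1) * ((1/2:ℝ)^2 + y^2 - 9)
          + 1/2 * ((1/2:ℝ)^2 + y^2 - 2*(1/2:ℝ) - 8) * MvPolynomial.eval ![(1/2:ℝ), y] W :=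
      funext fun y => hQ (1/2) y
    rw [heq]
    have h := (((hasDerivAt_id (s/2)).mul hA').mul hB').add ((hC'.const_mul (1/2)).mul hg2)
    refine h.congr_deriv ?_
    symm
    simp only [Pi.mul_apply, id_eq]
    linear_combination (-5*s^2/16 - 61/16 - d2/8) * hs
  rw [hPx.deriv, hQx.deriv, hPy.deriv, hQy.deriv]
  refine ⟨by ring, ?_, by nlinarith [mul_pos hs0 hWApos], ?_, ?_⟩
  · linear_combination (WA^2/4 - 16) * hs
  · linear_combination (64 - WA^2) * hs
  · nlinarith [sq_nonneg (144 - s*WA), mul_pos hs0 hWApos]
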